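/- Let l₁, l₂, l₃, l₄ be four pairwise independent linear forms in R[x,y,z] (four general lines). Then the columns of the 4×3 matrix d₂ with columns (l₄,−l₃,0,0)ᵀ, (0,l₃,−l₂,0)ᵀ, (0,0,l₂,−l₁)ᵀ generate the kernel (syzygy module) of the map R⁴ → R given by the row vector (l₁l₂l₃, l₁l₂l₄, l₁l₃l₄, l₂l₃l₄), provided l₁,l₂,l₃,l₄ are in general position (no two proportional, any three linearly independent... in fact any three span). -/

import Mathlib

open MvPolynomial Matrix

private lemma degOne_single {d : Fin 3 →₀ ℕ} (hd : Finsupp.degree d = 1) :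
    ∃ m, d = Finsupp.single m 1 := by
  have hsum : d 0 + d 1 + d 2 = 1 := by
    have h2 : Finsupp.degree d = ∑ i : Fin 3, d i :=
      Finset.sum_subset (Finset.subset_univ _)
        (fun i _ hi => Finsupp.notMem_support_iff.mp hi)
    rw [h2, Fin.sum_univ_three] at hd
    exact hd
  have : (d 0 = 1 ∧ d 1 = 0 ∧ d 2 = 0) ∨ (d 0 = 0 ∧ d 1 = 1 ∧ d 2 = 0) ∨
      (d 0 = 0 ∧ d 1 = 0 ∧ d 2 = 1) := by omega
  rcases this with ⟨h0, h1, h2⟩ | ⟨h0, h1, h2⟩ | ⟨h0, h1, h2⟩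
  · exact ⟨0, by ext i; fin_cases i <;> simp [Finsupp.single_apply, h0, h1, h2]⟩
  · exact ⟨1, by ext i; fin_cases i <;> simp [Finsupp.single_apply, h0, h1, h2]⟩
  · exact ⟨2, by ext i; fin_cases i <;> simp [Finsupp.single_apply, h0, h1, h2]⟩

private lemma homogOne_eq_sum {p : MvPolynomial (Fin 3) ℝ} (hp : p.IsHomogeneous 1) :
    p = ∑ m : Fin 3, C (coeff (Finsupp.single m 1) p) * X m := by
  ext d
  rw [coeff_sum]
  simp only [coeff_C_mul, coeff_X', mul_ite, mul_one, mul_zero]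
  by_cases hd : ∃ m : Fin 3, d = Finsupp.single m 1
  · obtain ⟨m, rfl⟩ := hd
    rw [Finset.sum_eq_single m]
    · simp
    · intro b _ hb
      rw [if_neg]
      intro hcon
      have := congrArg (fun f : Fin 3 →₀ ℕ => f b) hcon
      simp [Finsupp.single_apply] at this
      by_cases hmb : m = b
      · exact hb hmb.symm
      · simp [hmb] at this
    · simp
  · rw [hp.coeff_eq_zero, Finset.sum_eq_zero]
    · intro m _
      rw [if_neg]
      intro hcon
      exact hd ⟨m, hcon.symm⟩
    · intro hcon
      exact hd (degOne_single hcon)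

private lemma primeX (r : Fin 3) : Prime (X r : MvPolynomial (Fin 3) ℝ) := by
  have h0 : Prime (X 0 : MvPolynomial (Fin 3) ℝ) := by
    rw [← MulEquiv.prime_iff ((MvPolynomial.finSuccEquiv ℝ 2).toRingEquiv.toMulEquiv) (p := X 0)]
    show Prime ((MvPolynomial.finSuccEquiv ℝ 2) (X 0))
    rw [MvPolynomial.finSuccEquiv_X_zero]
    exact Polynomial.prime_X
  have h := (MulEquiv.prime_iff
    ((MvPolynomial.renameEquiv ℝ (Equiv.swap (0 : Fin 3) r)).toRingEquiv.toMulEquiv)).mpr h0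
  simpa using h

private lemma notXdvd {r s : Fin 3} (h : r ≠ s) :
    ¬ (X r : MvPolynomial (Fin 3) ℝ) ∣ X s := by
  rintro ⟨u, hu⟩
  have h2 := congrArg (aeval (fun t : Fin 3 => if t = r then (0:ℝ) else 1)) hu
  rw [_root_.map_mul, aeval_X, aeval_X, if_pos rfl, if_neg (Ne.symm h), zero_mul] at h2
  exact one_ne_zero h2

private lemma aeval_comp_id (P Q : Matrix (Fin 3) (Fin 3) ℝ) (h : Q * P = 1) :
    (MvPolynomial.aeval (fun r : Fin 3 => ∑ m : Fin 3, C (P r m) * X m) :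
        MvPolynomial (Fin 3) ℝ →ₐ[ℝ] MvPolynomial (Fin 3) ℝ).comp
      (MvPolynomial.aeval (fun r : Fin 3 => ∑ m : Fin 3, C (Q r m) * X m)) =
    AlgHom.id ℝ (MvPolynomial (Fin 3) ℝ) := by
  apply MvPolynomial.algHom_ext
  intro r
  simp only [AlgHom.comp_apply, aeval_X, map_sum, _root_.map_mul, aeval_C,
    algebraMap_eq, AlgHom.id_apply]
  have step : ∀ m : Fin 3,
      (C (Q r m) : MvPolynomial (Fin 3) ℝ) * ∑ k : Fin 3, (C (P m k) : MvPolynomial (Fin 3) ℝ) * X k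
      = ∑ k : Fin 3, (C (Q r m * P m k) : MvPolynomial (Fin 3) ℝ) * X k := by
    intro m
    rw [Finset.mul_sum]
    exact Finset.sum_congr rfl fun k _ => by rw [← mul_assoc, ← C_mul]
  rw [Finset.sum_congr rfl fun m _ => step m, Finset.sum_comm]
  have step2 : ∀ k : Fin 3, (∑ m : Fin 3, (C (Q r m * P m k) : MvPolynomial (Fin 3) ℝ) * X k)
      = (C ((Q * P) r k) : MvPolynomial (Fin 3) ℝ) * X k := by
    intro k
    rw [← Finset.sum_mul, ← map_sum]
    rfl
  rw [Finset.sum_congr rfl fun k _ => step2 k, h]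
  have step3 : ∀ k : Fin 3, (C ((1 : Matrix (Fin 3) (Fin 3) ℝ) r k) : MvPolynomial (Fin 3) ℝ) * X k
      = if k = r then X k else 0 := by
    intro k
    by_cases hk : k = r
    · simp [hk, Matrix.one_apply]
    · simp [Matrix.one_apply, Ne.symm hk, hk]
  rw [Finset.sum_congr rfl fun k _ => step3 k, Finset.sum_ite_eq' Finset.univ r]
  simp

private lemma exists_algEquiv (b : Fin 3 → MvPolynomial (Fin 3) ℝ)
    (hb : ∀ r, (b r).IsHomogeneous 1) (hlin : LinearIndependent ℝ b) :
    ∃ e : MvPolynomial (Fin 3) ℝ ≃ₐ[ℝ] MvPolynomial (Fin 3) ℝ, ∀ r, e (X r) = b r := by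
  set N : Matrix (Fin 3) (Fin 3) ℝ :=
    Matrix.of (fun r m => coeff (Finsupp.single m 1) (b r)) with hN
  have hrepr : ∀ r, b r = ∑ m : Fin 3, C (N r m) * X m := fun r => homogOne_eq_sum (hb r)
  have hunit : IsUnit N := by
    rw [← Matrix.linearIndependent_rows_iff_isUnit]
    rw [Fintype.linearIndependent_iff]
    intro g hg
    have hq : (∑ r, g r • b r) = 0 := by
      have hhom : (∑ r, g r • b r).IsHomogeneous 1 := by
        have : (∑ r, g r • b r) ∈ homogeneousSubmodule (Fin 3) ℝ 1 :=
          Submodule.sum_mem _ fun r _ => Submodule.smul_mem _ _ ((mem_homogeneousSubmodule _ _).mpr (hb r))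
        exact (mem_homogeneousSubmodule _ _).mp this
      rw [homogOne_eq_sum hhom]
      refine Finset.sum_eq_zero fun m _ => ?_
      have hcoeff : coeff (Finsupp.single m 1) (∑ r, g r • b r) = 0 := by
        rw [coeff_sum]
        have := congrFun hg m
        simpa [MvPolynomial.coeff_smul, Finset.sum_apply, hN] using this
      rw [hcoeff, map_zero, zero_mul]
    exact Fintype.linearIndependent_iff.mp hlin g hq
  have hdet : IsUnit N.det := (Matrix.isUnit_iff_isUnit_det N).mp hunit
  have h1 : N⁻¹ * N = 1 := Matrix.nonsing_inv_mul N hdet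
  have h2 : N * N⁻¹ = 1 := Matrix.mul_nonsing_inv N hdet
  refine ⟨AlgEquiv.ofAlgHom
    (MvPolynomial.aeval (fun r : Fin 3 => ∑ m : Fin 3, C (N r m) * X m))
    (MvPolynomial.aeval (fun r : Fin 3 => ∑ m : Fin 3, C (N⁻¹ r m) * X m))
    (aeval_comp_id N N⁻¹ h1) (aeval_comp_id N⁻¹ N h2), fun r => ?_⟩
  show (MvPolynomial.aeval (fun r : Fin 3 => ∑ m : Fin 3, C (N r m) * X m)) (X r) = b r
  rw [aeval_X, ← hrepr]

private lemma pack (b : Fin 3 → MvPolynomial (Fin 3) ℝ)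
    (hb : ∀ r, (b r).IsHomogeneous 1) (hlin : LinearIndependent ℝ b) :
    Prime (b 0) ∧ ¬ b 0 ∣ b 1 ∧ ¬ b 0 ∣ b 2 := by
  obtain ⟨e, he⟩ := exists_algEquiv b hb hlin
  have hsym : ∀ r, e.symm (b r) = X r := fun r => by
    rw [← he r, AlgEquiv.symm_apply_apply]
  refine ⟨?_, ?_, ?_⟩
  · have h := (MulEquiv.prime_iff (e.toRingEquiv.toMulEquiv)).mpr (primeX 0)
    have : e.toRingEquiv.toMulEquiv (X 0) = b 0 := he 0
    rwa [this] at h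
  · intro hdvd
    have h := map_dvd e.symm hdvd
    rw [hsym 0, hsym 1] at h
    exact notXdvd (by decide) h
  · intro hdvd
    have h := map_dvd e.symm hdvd
    rw [hsym 0, hsym 2] at h
    exact notXdvd (by decide) h

private lemma dvd_cancel {p a b c d : MvPolynomial (Fin 3) ℝ} (hp : Prime p)
    (ha : ¬ p ∣ a) (hb : ¬ p ∣ b) (hc : ¬ p ∣ c) (h : p ∣ a * b * c * d) : p ∣ d := by
  rcases hp.2.2 _ _ h with h' | h'
  · rcases hp.2.2 _ _ h' with h'' | h''
    · rcases hp.2.2 _ _ h'' with h3 | h3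
      · exact absurd h3 ha
      · exact absurd h3 hb
    · exact absurd h'' hc
  · exact h'

/-- For four homogeneous linear forms l₁,…,l₄ in ℝ[x,y,z], any three of which are
linearly independent, the kernel of d₁ = (l₁l₂l₃, l₁l₂l₄, l₁l₃l₄, l₂l₃l₄) : R⁴ → R
equals the image of the matrix d₂ with columns (l₄,−l₃,0,0), (0,l₃,−l₂,0), (0,0,l₂,−l₁). -/
theorem syzygies_of_four_lines (l : Fin 4 → MvPolynomial (Fin 3) ℝ)
    (hhom : ∀ i, (l i).IsHomogeneous 1)
    (hgen : ∀ i j k : Fin 4, i ≠ j → i ≠ k → j ≠ k →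
      LinearIndependent ℝ ![l i, l j, l k]) :
    LinearMap.ker
      ((Matrix.of (fun (_ : Fin 1) (j : Fin 4) =>
        ![l 0 * l 1 * l 2, l 0 * l 1 * l 3, l 0 * l 2 * l 3, l 1 * l 2 * l 3] j)).mulVecLin) =
    LinearMap.range
      ((Matrix.of (fun (i : Fin 4) (j : Fin 3) =>
        !![l 3, 0, 0; -(l 2), l 2, 0; 0, -(l 1), l 1; 0, 0, -(l 0)] i j)).mulVecLin) := by
  have hb : ∀ i j k : Fin 4, ∀ r : Fin 3, ((![l i, l j, l k]) r).IsHomogeneous 1 := by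
    intro i j k r
    fin_cases r <;> simp <;> apply hhom
  obtain ⟨P3, nd30, nd31⟩ := pack ![l 3, l 0, l 1] (hb 3 0 1) (hgen 3 0 1 (by decide) (by decide) (by decide))
  obtain ⟨-, -, nd32⟩ := pack ![l 3, l 1, l 2] (hb 3 1 2) (hgen 3 1 2 (by decide) (by decide) (by decide))
  obtain ⟨P0, nd01, nd02⟩ := pack ![l 0, l 1, l 2] (hb 0 1 2) (hgen 0 1 2 (by decide) (by decide) (by decide))
  obtain ⟨-, nd03, -⟩ := pack ![l 0, l 3, l 1] (hb 0 3 1) (hgen 0 3 1 (by decide) (by decide) (by decide))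
  obtain ⟨P1, nd12, -⟩ := pack ![l 1, l 2, l 3] (hb 1 2 3) (hgen 1 2 3 (by decide) (by decide) (by decide))
  simp only [Matrix.cons_val_zero, Matrix.cons_val_one, Matrix.head_cons,
    Matrix.cons_val_two, Matrix.tail_cons] at P3 P0 P1 nd30 nd31 nd32 nd01 nd02 nd03 nd12
  have hl0 : l 0 ≠ 0 := P0.ne_zero
  have hl1 : l 1 ≠ 0 := P1.ne_zero
  have hl3 : l 3 ≠ 0 := P3.ne_zero
  ext v
  simp only [LinearMap.mem_ker, LinearMap.mem_range, Matrix.mulVecLin_apply]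
  constructor
  · intro hker
    have h : l 0 * l 1 * l 2 * v 0 + l 0 * l 1 * l 3 * v 1 + l 0 * l 2 * l 3 * v 2
        + l 1 * l 2 * l 3 * v 3 = 0 := by
      have := congrFun hker 0
      simpa [Matrix.mulVec, dotProduct, Fin.sum_univ_four] using this
    obtain ⟨t1, ht1⟩ : l 3 ∣ v 0 := by
      refine dvd_cancel P3 nd30 nd31 nd32 ⟨-(l 0 * l 1 * v 1 + l 0 * l 2 * v 2 + l 1 * l 2 * v 3), ?_⟩
      linear_combination h
    obtain ⟨s, hs⟩ : l 0 ∣ v 3 := by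
      refine dvd_cancel P0 nd01 nd02 nd03
        ⟨-(l 1 * l 2 * v 0 + l 1 * l 3 * v 1 + l 2 * l 3 * v 2), ?_⟩
      linear_combination h
    have hE : l 1 * l 2 * t1 + l 1 * v 1 + l 2 * v 2 + l 1 * l 2 * s = 0 := by
      have hz : l 0 * l 3 * (l 1 * l 2 * t1 + l 1 * v 1 + l 2 * v 2 + l 1 * l 2 * s) = 0 := by
        linear_combination h - (l 0 * l 1 * l 2) * ht1 - (l 1 * l 2 * l 3) * hs
      rcases mul_eq_zero.mp hz with hz' | hz'
      · exact absurd hz' (mul_ne_zero hl0 hl3)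
      · exact hz'
    obtain ⟨u, hu⟩ : l 1 ∣ v 2 := by
      rcases P1.2.2 (l 2) (v 2) ⟨-(l 2 * t1 + v 1 + l 2 * s), by linear_combination hE⟩ with h' | h'
      · exact absurd h' nd12
      · exact h'
    have hv1 : v 1 = -(l 2 * (t1 + u + s)) := by
      have hz : l 1 * (v 1 + l 2 * (t1 + u + s)) = 0 := by
        linear_combination hE - l 2 * hu
      rcases mul_eq_zero.mp hz with hz' | hz'
      · exact absurd hz' hl1
      · linear_combination hz'
    refine ⟨![t1, -(u + s), -s], ?_⟩
    funext i
    fin_cases i <;>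
      simp [Matrix.mulVec, dotProduct, Fin.sum_univ_three] <;>
      first
        | linear_combination -ht1
        | linear_combination -hv1
        | linear_combination -hu
        | linear_combination -hs
  · rintro ⟨t, rfl⟩
    funext i
    fin_cases i
    simp [Matrix.mulVec, dotProduct, Fin.sum_univ_three, Fin.sum_univ_four,
      Matrix.vecHead, Matrix.vecTail, Function.comp]
    ring
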